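/- For every x in [0,1] and every natural number i > 0, f((2 + x) / 3^i) = (2/3)^i · f(x) + 2^(i-1) / 3^i. -/

import Mathlib

open intervalIntegral Set

theorem bourbaki_stmt (f : ℝ → ℝ)
    (hcont : ContinuousOn f (Set.Icc 0 1))
    (h0 : f 0 = 0) (h1 : f 1 = 1)
    (hw1 : ∀ x ∈ Set.Icc (0:ℝ) 1, f (x / 3) = (2/3) * f x)
    (hw2 : ∀ x ∈ Set.Icc (0:ℝ) 1, f ((2 - x) / 3) = (1/3) * (1 + f x))
    (hw3 : ∀ x ∈ Set.Icc (0:ℝ) 1, f ((2 + x) / 3) = 1/3 + (2/3) * f x) :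
    ∀ x ∈ Set.Icc (0:ℝ) 1, ∀ i : ℕ, 0 < i → f ((2 + x) / 3 ^ i) = (2/3) ^ i * f x + 2 ^ (i - 1) / 3 ^ i := by
  intro x hx i hi
  induction i with
  | zero => omega
  | succ n ih =>
    rcases Nat.eq_zero_or_pos n with hn | hn
    · subst hn
      have := hw3 x hx
      norm_num [this]; ring
    · have hxm : (2 + x) / 3 ^ n ∈ Set.Icc (0:ℝ) 1 := by
        obtain ⟨hx0, hx1⟩ := hx
        constructor
        · positivity
        · rw [div_le_one (by positivity)]
          calc 2 + x ≤ 3 := by linarith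
          _ = (3:ℝ) ^ 1 := by ring
          _ ≤ 3 ^ n := pow_le_pow_right₀ (by norm_num) hn
      have key := hw1 _ hxm
      have h3 : (2 + x) / 3 ^ n / 3 = (2 + x) / 3 ^ (n + 1) := by
        rw [pow_succ]; ring
      rw [h3, ih hn] at key
      rw [key]
      have hn1 : n - 1 + 1 = n := Nat.succ_pred_eq_of_pos hn
      have h2 : (2:ℝ) ^ (n - 1) * 2 = 2 ^ n := by rw [← pow_succ, hn1]
      field_simp
      rw [Nat.add_sub_cancel, pow_succ (3:ℝ) n, ← h2]
      ring
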